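/- Let f : [0,∞) → [0,∞) be differentiable with f(0) = 0, and suppose its derivative f′ is concave, differentiable, and strictly increasing. Then for every y ≥ 0: ∫₀^y f′(2t) dt − f(y) ≥ (1/4)·sup_{z ≥ 0} (f′(2y)·z − f(z)). Equivalently, (3/4)·f(2y) − f(y) ≥ (y/2)·f′(2y) for all y ≥ 0. -/

import Mathlib

/-- for a production cost `f : [0,∞) → [0,∞)` with `f(0) = 0` whose
derivative `f'` is concave, differentiable, and strictly increasing, the pricing
function `p(y) = f'(2y)` is feasible with `α = 4` and `β = 0`:
`∫₀^y f'(2t) dt − f(y) ≥ (1/4)·sup_{z ≥ 0}(f'(2y)·z − f(z))` for all `y ≥ 0`;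
equivalently, `(3/4)·f(2y) − f(y) ≥ (y/2)·f'(2y)`. -/
theorem stmt5 (f f' : ℝ → ℝ)
    (hf0 : f 0 = 0)
    (hfnn : ∀ y ≥ (0:ℝ), 0 ≤ f y)
    (hderiv : ∀ y ≥ (0:ℝ), HasDerivWithinAt f (f' y) (Set.Ici 0) y)
    (h'conc : ConcaveOn ℝ (Set.Ici 0) f')
    (h'diff : DifferentiableOn ℝ f' (Set.Ici 0))
    (h'mono : StrictMonoOn f' (Set.Ici 0)) :
    ∀ y ≥ (0:ℝ),
      ((∫ t in (0:ℝ)..y, f' (2*t)) - f y ≥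
        (1/4) * sSup ((fun z => f' (2*y) * z - f z) '' Set.Ici 0)) ∧
      ((3/4) * f (2*y) - f y ≥ (y/2) * f' (2*y)) := by
  have hfc : ContinuousOn f (Set.Ici 0) := fun x hx => (hderiv x hx).continuousWithinAt
  have h'c : ContinuousOn f' (Set.Ici 0) := h'diff.continuousOn
  have hdat : ∀ x : ℝ, 0 < x → HasDerivAt f (f' x) x := fun x hx =>
    (hderiv x hx.le).hasDerivAt (Ici_mem_nhds hx)
  -- tangent line inequality (convexity of f)
  have tangent : ∀ p ∈ Set.Ici (0:ℝ), ∀ z ∈ Set.Ici (0:ℝ),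
      f' p * (z - p) ≤ f z - f p := by
    intro p hp z hz
    rcases lt_trichotomy z p with h | h | h
    · obtain ⟨c, hc, hceq⟩ := exists_hasDerivAt_eq_slope f f' h
        (hfc.mono (fun x hx => le_trans hz hx.1))
        (fun x hx => hdat x (lt_of_le_of_lt hz hx.1))
      have hcle : f' c ≤ f' p :=
        (h'mono (le_trans hz hc.1.le) hp hc.2).le
      rw [hceq] at hcle
      rw [div_le_iff₀ (by linarith)] at hcle
      nlinarith
    · subst h; simp
    · obtain ⟨c, hc, hceq⟩ := exists_hasDerivAt_eq_slope f f' h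
        (hfc.mono (fun x hx => le_trans hp hx.1))
        (fun x hx => hdat x (lt_of_le_of_lt hp hx.1))
      have hcge : f' p ≤ f' c :=
        (h'mono hp (le_trans hp hc.1.le) hc.1).le
      rw [hceq] at hcge
      rw [le_div_iff₀ (by linarith)] at hcge
      nlinarith
  -- fundamental theorem of calculus on [a,b] ⊆ [0,∞)
  have ftc : ∀ a b : ℝ, 0 ≤ a → a ≤ b → (∫ t in a..b, f' t) = f b - f a := by
    intro a b ha hab
    exact intervalIntegral.integral_eq_sub_of_hasDeriv_right_of_le hab
      (hfc.mono (fun x hx => le_trans ha hx.1))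
      (fun x hx => (hdat x (lt_of_le_of_lt ha hx.1)).hasDerivWithinAt)
      ((h'c.mono (fun x hx => le_trans ha hx.1)).intervalIntegrable_of_Icc hab)
  -- the key inequality (second part of the statement)
  have key : ∀ y : ℝ, 0 ≤ y → (3/4) * f (2*y) - f y ≥ (y/2) * f' (2*y) := by
    intro y hy
    rcases eq_or_lt_of_le hy with h0 | h0
    · rw [← h0]; norm_num [hf0]
    set c := f' y with hc
    set d := f' (2*y) with hd
    set L : ℝ → ℝ := fun t => (2*c - d) + t * ((d - c)/y) with hL
    have hy2 : y < 2*y := by linarith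
    have hLint : ∀ a b : ℝ, IntervalIntegrable L MeasureTheory.volume a b := fun a b =>
      ((continuous_const.add (continuous_id.mul continuous_const))).intervalIntegrable a b
    have hLval : ∀ a b : ℝ, (∫ t in a..b, L t)
        = (2*c - d)*(b - a) + ((b^2 - a^2)/2) * ((d - c)/y) := by
      intro a b
      rw [hL]
      rw [intervalIntegral.integral_add intervalIntegrable_const
        (intervalIntegral.intervalIntegrable_id.mul_const _)]
      rw [intervalIntegral.integral_mul_const, integral_id, intervalIntegral.integral_const]
      simp only [smul_eq_mul]
      ring
    -- pointwise bounds from concavity of f'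
    have hub : ∀ t ∈ Set.Icc (0:ℝ) y, f' t ≤ L t := by
      intro t ht
      have hs : 0 < 2*y - t := by linarith [ht.2]
      have hcomb := h'conc.2 (ht.1 : t ∈ Set.Ici (0:ℝ))
        (show (2*y : ℝ) ∈ Set.Ici (0:ℝ) by simp; linarith)
        (show (0:ℝ) ≤ y/(2*y - t) by positivity)
        (show (0:ℝ) ≤ (y - t)/(2*y - t) by
          apply div_nonneg _ hs.le; linarith [ht.2])
        (show y/(2*y - t) + (y - t)/(2*y - t) = 1 by rw [← add_div, div_eq_one_iff_eq hs.ne']; ring)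
      rw [smul_eq_mul, smul_eq_mul, smul_eq_mul, smul_eq_mul] at hcomb
      have harg : (y/(2*y - t)) * t + ((y - t)/(2*y - t)) * (2*y) = y := by
        rw [div_mul_eq_mul_div, div_mul_eq_mul_div, ← add_div, div_eq_iff hs.ne']; ring
      rw [harg] at hcomb
      rw [div_mul_eq_mul_div, div_mul_eq_mul_div, ← add_div,
        div_le_iff₀ hs] at hcomb
      have expand : L t = ((2*c - d)*y + t*(d - c))/y := by
        rw [hL]; field_simp; try ring
      rw [expand, le_div_iff₀ h0]
      nlinarith [hcomb]
    have hlb : ∀ t ∈ Set.Icc y (2*y), L t ≤ f' t := by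
      intro t ht
      have hcomb := h'conc.2 (show y ∈ Set.Ici (0:ℝ) from hy)
        (show (2*y : ℝ) ∈ Set.Ici (0:ℝ) by simp; linarith)
        (show (0:ℝ) ≤ (2*y - t)/y by
          apply div_nonneg _ h0.le; linarith [ht.2])
        (show (0:ℝ) ≤ (t - y)/y by
          apply div_nonneg _ h0.le; linarith [ht.1])
        (show (2*y - t)/y + (t - y)/y = 1 by field_simp; try ring)
      rw [smul_eq_mul, smul_eq_mul, smul_eq_mul, smul_eq_mul] at hcomb
      have harg : ((2*y - t)/y) * y + ((t - y)/y) * (2*y) = t := by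
        field_simp; try ring
      rw [harg] at hcomb
      rw [div_mul_eq_mul_div, div_mul_eq_mul_div, ← add_div,
        div_le_iff₀ h0] at hcomb
      have expand : L t = ((2*c - d)*y + t*(d - c))/y := by
        rw [hL]; field_simp; try ring
      rw [expand, div_le_iff₀ h0]
      nlinarith [hcomb]
    have hf'int1 : IntervalIntegrable f' MeasureTheory.volume 0 y :=
      (h'c.mono (fun x hx => hx.1)).intervalIntegrable_of_Icc hy
    have hf'int2 : IntervalIntegrable f' MeasureTheory.volume y (2*y) :=
      (h'c.mono (fun x hx => le_trans hy hx.1)).intervalIntegrable_of_Icc hy2.le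
    have hA : f y ≤ (3*y/2)*c - (y/2)*d := by
      have h1 := intervalIntegral.integral_mono_on hy hf'int1 (hLint 0 y) hub
      rw [ftc 0 y le_rfl hy, hf0, hLval] at h1
      have hsimp : (y^2 - 0^2)/2 * ((d - c)/y) = y*(d - c)/2 := by
        field_simp; try ring
      rw [hsimp] at h1
      linarith
    have hB : (y/2)*(c + d) ≤ f (2*y) - f y := by
      have h1 := intervalIntegral.integral_mono_on hy2.le (hLint y (2*y)) hf'int2 hlb
      rw [ftc y (2*y) hy hy2.le, hLval] at h1
      have hsimp : ((2*y)^2 - y^2)/2 * ((d - c)/y) = 3*y*(d - c)/2 := by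
        field_simp; try ring
      rw [hsimp] at h1
      linarith
    linarith
  intro y hy
  have h2ynn : (0:ℝ) ≤ 2*y := by linarith
  refine ⟨?_, key y hy⟩
  -- the integral of f'(2t) equals f(2y)/2
  have hint : (∫ t in (0:ℝ)..y, f' (2*t)) = f (2*y) / 2 := by
    have hderiv2 : ∀ x ∈ Set.Ioo (0:ℝ) y,
        HasDerivWithinAt (fun t => f (2*t) / 2) (f' (2*x)) (Set.Ioi x) x := by
      intro x hx
      have hin : HasDerivAt (fun t : ℝ => 2*t) 2 x := by
        simpa using (hasDerivAt_id x).const_mul (2:ℝ)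
      have h1 : HasDerivAt (fun t => f (2*t)) (f' (2*x) * 2) x :=
        (hdat (2*x) (by linarith [hx.1])).comp x hin
      have h2 := h1.div_const 2
      have heq : f' (2*x) * 2 / 2 = f' (2*x) := by ring
      rw [heq] at h2
      exact h2.hasDerivWithinAt
    have hcont : ContinuousOn (fun t => f (2*t) / 2) (Set.Icc 0 y) := by
      apply ContinuousOn.div_const
      exact hfc.comp (continuous_const.mul continuous_id).continuousOn
        (fun x hx => by simp; linarith [hx.1])
    have hintg : IntervalIntegrable (fun t => f' (2*t)) MeasureTheory.volume 0 y := by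
      apply ContinuousOn.intervalIntegrable_of_Icc hy
      exact h'c.comp (continuous_const.mul continuous_id).continuousOn
        (fun x hx => by simp; linarith [hx.1])
    have := intervalIntegral.integral_eq_sub_of_hasDeriv_right_of_le hy hcont hderiv2 hintg
    rw [this]
    simp [hf0]
  -- bound the supremum using the tangent inequality
  have hsup : sSup ((fun z => f' (2*y) * z - f z) '' Set.Ici 0)
      ≤ 2*y * f' (2*y) - f (2*y) := by
    apply csSup_le (Set.Nonempty.image _ ⟨0, le_refl 0⟩)
    rintro x ⟨z, hz, rfl⟩
    have ht := tangent (2*y) h2ynn z hz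
    show f' (2*y) * z - f z ≤ 2*y * f' (2*y) - f (2*y)
    nlinarith [ht]
  have hk := key y hy
  rw [hint]
  have h4 : (1/4) * sSup ((fun z => f' (2*y) * z - f z) '' Set.Ici 0)
      ≤ (1/4) * (2*y * f' (2*y) - f (2*y)) := by linarith
  linarith
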